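/- Let C be a permutation-invariant partition of the player set of a finite normal-form game with identical interests. If q^c : [0,∞) → Δ^n is a solution of the joint CT-ECFP differential inclusion q̇ ∈ BR(q̄) − q, then the associated centroid process q̄^c (the centroid distribution of q^c(t) at each time t) is a solution of the centroid differential inclusion ẏ ∈ BR(y) − y. -/
import Mathlib


open MeasureTheory Filter Topology

noncomputable section

namespace ECFP

variable {ι A κ : Type*}

/-- The mixed-strategy simplex over a finite action set `Y` inside the action universe `A`. -/
def simplex (Y : Finset A) : Set (A → ℝ) :=
  {p | (∀ a, 0 ≤ p a) ∧ (∀ a, a ∉ Y → p a = 0) ∧ ∑ a ∈ Y, p a = 1}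

/-- The space `Δⁿ` of joint mixed strategies. -/
def Delta (Y : ι → Finset A) : Set (ι → A → ℝ) :=
  {p | ∀ i, p i ∈ simplex (Y i)}

variable [Fintype ι] [DecidableEq ι] [Fintype A] [DecidableEq κ]

/-- The mixed extension of the common utility `u`:
`U(p₁,…,pₙ) = ∑_y u(y) p₁(y₁)⋯pₙ(yₙ)`. -/
def U (u : (ι → A) → ℝ) (p : ι → A → ℝ) : ℝ :=
  ∑ y : ι → A, u y * ∏ i, p i (y i)

/-- The `ε`-best-response set of player `i` against the joint strategy `p`
(only the components `p_{-i}` matter, since player `i`'s component is overwritten):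
`{pᵢ ∈ Δᵢ : U(pᵢ,p_{-i}) ≥ U(qᵢ,p_{-i}) - ε  ∀ qᵢ ∈ Δᵢ}`. -/
def BRi (Y : ι → Finset A) (u : (ι → A) → ℝ) (ε : ℝ) (p : ι → A → ℝ) (i : ι) :
    Set (A → ℝ) :=
  {pi | pi ∈ simplex (Y i) ∧
    ∀ qi ∈ simplex (Y i),
      U u (Function.update p i pi) ≥ U u (Function.update p i qi) - ε}

/-- The joint `ε`-best-response set `BR^ε(p) = (BR₁^ε(p_{-1}),…,BRₙ^ε(p_{-n}))`. -/
def BR (Y : ι → Finset A) (u : (ι → A) → ℝ) (ε : ℝ) (p : ι → A → ℝ) :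
    Set (ι → A → ℝ) :=
  {b | ∀ i, b i ∈ BRi Y u ε p i}

/-- The profile obtained from `y` by swapping the strategies of players `i` and `j`. -/
def swapStrat (y : ι → A) (i j : ι) : ι → A :=
  Function.update (Function.update y i (y j)) j (y i)

/-- `cls : ι → κ` encodes a permutation-invariant partition of the player set (the classes
are the fibers of `cls`): players in the same class have the same action set, and the utility
is invariant under swapping the strategies of two same-class players in any strategy profile. -/
def PermInvariant (Y : ι → Finset A) (u : (ι → A) → ℝ) (cls : ι → κ) : Prop :=
  ∀ i j : ι, cls i = cls j →
    Y i = Y j ∧ ∀ y : ι → A, (∀ k, y k ∈ Y k) → u (swapStrat y i j) = u y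

/-- The equivalence class (as a finset of players) of player `i`. -/
def cluster (cls : ι → κ) (i : ι) : Finset ι :=
  Finset.univ.filter (fun j => cls j = cls i)

/-- The centroid distribution `p̄`: player `i` is assigned the average of the strategies of
the players in `i`'s class. -/
def centroid (cls : ι → κ) (p : ι → A → ℝ) : ι → A → ℝ :=
  fun i => ((cluster cls i).card : ℝ)⁻¹ • ∑ j ∈ cluster cls i, p j

/-- A joint strategy is class-constant if same-class players use identical strategies. -/
def classConst (cls : ι → κ) (p : ι → A → ℝ) : Prop :=
  ∀ i j, cls i = cls j → p i = p j

/-- The set of Nash equilibria. -/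
def NE (Y : ι → Finset A) (u : (ι → A) → ℝ) : Set (ι → A → ℝ) :=
  {p | p ∈ Delta Y ∧ ∀ i, ∀ qi ∈ simplex (Y i),
    U u (Function.update p i qi) ≤ U u p}

/-- The set of symmetric Nash equilibria relative to the partition `cls`. -/
def SNE (Y : ι → Finset A) (u : (ι → A) → ℝ) (cls : ι → κ) : Set (ι → A → ℝ) :=
  {p | p ∈ NE Y u ∧ classConst cls p}

/-- The set of mean-centric equilibria relative to the partition `cls`:
`U(pᵢ, p̄_{-i}) ≥ U(pᵢ', p̄_{-i})` for all `pᵢ' ∈ Δᵢ` and all `i`. -/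
def MCE (Y : ι → Finset A) (u : (ι → A) → ℝ) (cls : ι → κ) : Set (ι → A → ℝ) :=
  {p | p ∈ Delta Y ∧ ∀ i, ∀ qi ∈ simplex (Y i),
    U u (Function.update (centroid cls p) i qi)
      ≤ U u (Function.update (centroid cls p) i (p i))}

/-- `V(p) = (1/n) ∑ᵢ U(pᵢ, p̄_{-i})`. -/
def Vfun (u : (ι → A) → ℝ) (cls : ι → κ) (p : ι → A → ℝ) : ℝ :=
  (Fintype.card ι : ℝ)⁻¹ * ∑ i, U u (Function.update (centroid cls p) i (p i))

/-- A discrete-time ECFP process w.r.t. `(Γ, 𝒞)`: `q(1) = a(1)`,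
`q(t+1) = q(t) + γₜ (a(t+1) − q(t))` and `a(t+1) ∈ BR^{εₜ}(q̄(t))` for all `t`
(time is indexed by `ℕ`, i.e. `t = 0` plays the role of `t = 1` in the paper). -/
structure IsECFP (Y : ι → Finset A) (u : (ι → A) → ℝ) (cls : ι → κ)
    (γ ε : ℕ → ℝ) (a q : ℕ → ι → A → ℝ) : Prop where
  a_init_mem : a 0 ∈ Delta Y
  q_mem : ∀ t, q t ∈ Delta Y
  init : q 0 = a 0
  step : ∀ t, q (t + 1) = q t + γ t • (a (t + 1) - q t)
  br : ∀ t, a (t + 1) ∈ BR Y u (ε t) (centroid cls (q t))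

/-- A solution of the differential inclusion `ẋ ∈ F(x)` taking values in `Δⁿ`:
an everywhere-`Δⁿ`-valued trajectory on `[0,∞)` which is the integral of a locally
integrable selection `g(t) ∈ F(x(t))` (a.e.). -/
def IsSolution (Y : ι → Finset A) (F : (ι → A → ℝ) → Set (ι → A → ℝ))
    (x : ℝ → ι → A → ℝ) : Prop :=
  (∀ t : ℝ, 0 ≤ t → x t ∈ Delta Y) ∧
  ∃ g : ℝ → ι → A → ℝ,
    LocallyIntegrableOn g (Set.Ici (0 : ℝ)) ∧
    (∀ᵐ t ∂(volume.restrict (Set.Ici (0 : ℝ))), g t ∈ F (x t)) ∧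
    ∀ t : ℝ, 0 ≤ t → x t = x 0 + ∫ s in Set.Ioc (0 : ℝ) t, g s

/-- Right-hand side of the joint CT-ECFP differential inclusion `q̇ ∈ BR(q̄) − q`. -/
def Fjoint (Y : ι → Finset A) (u : (ι → A) → ℝ) (cls : ι → κ)
    (q : ι → A → ℝ) : Set (ι → A → ℝ) :=
  (fun b => b - q) '' BR Y u 0 (centroid cls q)

/-- Right-hand side of the centroid CT-ECFP differential inclusion `ẏ ∈ BR(y) − y`. -/
def Fcent (Y : ι → Finset A) (u : (ι → A) → ℝ)
    (y : ι → A → ℝ) : Set (ι → A → ℝ) :=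
  (fun b => b - y) '' BR Y u 0 y

/-- The ω-limit set of a continuous-time trajectory: all limits of sequences
`x(t_k)` with `t_k → ∞`. -/
def omegaLimitSet (x : ℝ → ι → A → ℝ) : Set (ι → A → ℝ) :=
  {p | ∃ tk : ℕ → ℝ, Tendsto tk atTop atTop ∧ Tendsto (fun k => x (tk k)) atTop (𝓝 p)}

/-- The set of limit points of a (discrete-time) sequence. -/
def seqLimitPoints (q : ℕ → ι → A → ℝ) : Set (ι → A → ℝ) :=
  {p | ∃ φ : ℕ → ℕ, StrictMono φ ∧ Tendsto (fun k => q (φ k)) atTop (𝓝 p)}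

/-- A compact set `X ⊆ Δⁿ` is internally chain transitive for the inclusion `ẋ ∈ F(x)`:
any two points of `X` can be joined, for every `ε > 0` and `T > 0`, by finitely many
solution pieces of duration `> T` staying in `X`, with jumps of size `≤ ε`. -/
def InternallyChainTransitive (Y : ι → Finset A)
    (F : (ι → A → ℝ) → Set (ι → A → ℝ)) (X : Set (ι → A → ℝ)) : Prop :=
  IsCompact X ∧ X ⊆ Delta Y ∧
  ∀ ξ ∈ X, ∀ η ∈ X, ∀ ε : ℝ, 0 < ε → ∀ T : ℝ, 0 < T →
    ∃ k : ℕ, 0 < k ∧ ∃ x : ℕ → ℝ → ι → A → ℝ, ∃ tt : ℕ → ℝ,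
      (∀ i < k, IsSolution Y F (x i)) ∧
      (∀ i < k, T < tt i) ∧
      (∀ i < k, ∀ s : ℝ, 0 ≤ s → s ≤ tt i → x i s ∈ X) ∧
      (∀ i, i + 1 < k → ‖x i (tt i) - x (i + 1) 0‖ ≤ ε) ∧
      ‖x 0 0 - ξ‖ ≤ ε ∧ ‖x (k - 1) (tt (k - 1)) - η‖ ≤ ε

variable [Nonempty ι]

/-! ### Auxiliary lemmas -/

lemma mem_cluster_self (cls : ι → κ) (i : ι) : i ∈ cluster cls i := by
  simp [cluster]

lemma mem_cluster_iff {cls : ι → κ} {i j : ι} : j ∈ cluster cls i ↔ cls j = cls i := by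
  simp [cluster]

lemma cluster_card_pos (cls : ι → κ) (i : ι) : 0 < (cluster cls i).card :=
  Finset.card_pos.2 ⟨i, mem_cluster_self cls i⟩

lemma cluster_eq (cls : ι → κ) {i j : ι} (h : cls i = cls j) :
    cluster cls i = cluster cls j := by
  unfold cluster; rw [h]

lemma centroid_classConst (cls : ι → κ) (p : ι → A → ℝ) :
    classConst cls (centroid cls p) := by
  intro i j h
  unfold centroid
  rw [cluster_eq cls h]

lemma centroid_apply (cls : ι → κ) (p : ι → A → ℝ) (i : ι) (a : A) :
    centroid cls p i a = ((cluster cls i).card : ℝ)⁻¹ * ∑ j ∈ cluster cls i, p j a := by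
  simp [centroid, Finset.sum_apply]

lemma avg_mem_simplex {Yi : Finset A} {S : Finset ι} (hS : S.Nonempty) {b : ι → A → ℝ}
    (hb : ∀ j ∈ S, b j ∈ simplex Yi) :
    ((S.card : ℝ)⁻¹ • ∑ j ∈ S, b j) ∈ simplex Yi := by
  have hc : (0 : ℝ) < S.card := by exact_mod_cast Finset.card_pos.2 hS
  refine ⟨fun a => ?_, fun a ha => ?_, ?_⟩
  · simp only [Pi.smul_apply, Finset.sum_apply, smul_eq_mul]
    exact mul_nonneg (inv_nonneg.2 hc.le)
      (Finset.sum_nonneg fun j hj => (hb j hj).1 a)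
  · simp only [Pi.smul_apply, Finset.sum_apply, smul_eq_mul]
    rw [Finset.sum_eq_zero fun j hj => (hb j hj).2.1 a ha, mul_zero]
  · simp only [Pi.smul_apply, Finset.sum_apply, smul_eq_mul]
    rw [← Finset.mul_sum, Finset.sum_comm]
    rw [Finset.sum_congr rfl fun j hj => (hb j hj).2.2]
    simp [mul_comm, Finset.sum_const, hc.ne']

lemma centroid_mem_Delta {Y : ι → Finset A} {u : (ι → A) → ℝ} {cls : ι → κ}
    (hpi : PermInvariant Y u cls) {p : ι → A → ℝ} (hp : p ∈ Delta Y) :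
    centroid cls p ∈ Delta Y := by
  intro i
  have : centroid cls p i = ((cluster cls i).card : ℝ)⁻¹ • ∑ j ∈ cluster cls i, p j := rfl
  rw [this]
  exact avg_mem_simplex ⟨i, mem_cluster_self cls i⟩ fun j hj => by
    rw [← (hpi j i (mem_cluster_iff.1 hj)).1]; exact hp j

/-- The centroid map as a linear map. -/
def centroidLM (cls : ι → κ) : (ι → A → ℝ) →ₗ[ℝ] (ι → A → ℝ) where
  toFun := centroid cls
  map_add' p q := by
    funext i
    simp [centroid, Finset.sum_add_distrib, smul_add]
  map_smul' c p := by
    funext i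
    simp only [centroid, RingHom.id_apply, Pi.smul_apply, ← Finset.smul_sum]
    rw [smul_comm]

/-- The centroid map as a continuous linear map. -/
def centroidCLM (cls : ι → κ) : (ι → A → ℝ) →L[ℝ] (ι → A → ℝ) :=
  (centroidLM cls).toContinuousLinearMap

@[simp] lemma centroidCLM_apply (cls : ι → κ) (p : ι → A → ℝ) :
    centroidCLM cls p = centroid cls p := rfl

lemma U_update (u : (ι → A) → ℝ) (p : ι → A → ℝ) (i : ι) (r : A → ℝ) :
    U u (Function.update p i r) =
      ∑ y : ι → A, u y * (r (y i) * ∏ l ∈ Finset.univ.erase i, p l (y l)) := by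
  unfold U
  refine Finset.sum_congr rfl fun y _ => ?_
  congr 1
  rw [← Finset.mul_prod_erase _ _ (Finset.mem_univ i), Function.update_self]
  congr 1
  exact Finset.prod_congr rfl fun l hl => by
    rw [Function.update_of_ne (Finset.ne_of_mem_erase hl)]

lemma comp_swap_eq (y : ι → A) (i j : ι) :
    (y ∘ Equiv.swap i j) = swapStrat y i j := by
  funext l
  rcases eq_or_ne l j with rfl | hlj
  · simp [swapStrat, Equiv.swap_apply_right]
  rcases eq_or_ne l i with rfl | hli
  · simp [swapStrat, Function.update_of_ne hlj, Equiv.swap_apply_left]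
  · simp [swapStrat, Function.update_of_ne hlj, Function.update_of_ne hli,
      Equiv.swap_apply_of_ne_of_ne hli hlj]

/-- Key symmetry lemma: for a class-constant joint strategy `p` in `Δⁿ`, the payoff from
deviating to `r` is the same for any two same-class players. -/
lemma U_update_swap {Y : ι → Finset A} {u : (ι → A) → ℝ} {cls : ι → κ}
    (hpi : PermInvariant Y u cls) {p : ι → A → ℝ} (hpD : p ∈ Delta Y)
    (hcc : classConst cls p) {i j : ι} (hij : cls i = cls j) {r : A → ℝ}
    (hr : r ∈ simplex (Y i)) :
    U u (Function.update p i r) = U u (Function.update p j r) := by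
  rcases eq_or_ne i j with rfl | hne
  · rfl
  set σ := Equiv.swap i j with hσ
  -- the reindexing bijection on pure strategy profiles
  have hinv : ∀ y : ι → A, (y ∘ σ) ∘ σ = y := by
    intro y; funext l; simp [hσ, Function.comp]
  set e : (ι → A) ≃ (ι → A) :=
    { toFun := fun y => y ∘ σ
      invFun := fun y => y ∘ σ
      left_inv := hinv
      right_inv := hinv } with he
  set q := Function.update p i r with hq
  set q' := Function.update p j r with hq'
  have hqσ : ∀ l, q (σ l) = q' l := by
    intro l
    by_cases hli : l = i
    · rw [hli, hσ, Equiv.swap_apply_left, hq, hq',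
        Function.update_of_ne hne.symm, Function.update_of_ne hne]
      exact hcc j i hij.symm
    by_cases hlj : l = j
    · rw [hlj, hσ, Equiv.swap_apply_right, hq, hq',
        Function.update_self, Function.update_self]
    · rw [hσ, Equiv.swap_apply_of_ne_of_ne hli hlj, hq, hq',
        Function.update_of_ne hlj, Function.update_of_ne hli]
  have hq'simp : ∀ l, q' l ∈ simplex (Y l) := by
    intro l
    by_cases hlj : l = j
    · subst hlj
      rw [hq', Function.update_self, ← (hpi i l hij).1]
      exact hr
    · rw [hq', Function.update_of_ne hlj]; exact hpD l
  have key : ∀ y : ι → A,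
      u (e y) * ∏ l, q l ((e y) l) = u y * ∏ l, q' l (y l) := by
    intro y
    have hprod : ∏ l, q l ((e y) l) = ∏ l, q' l (y l) := by
      have h1 : ∀ l, q l = q' (σ l) := by
        intro l
        have h := hqσ (σ l)
        simp only [hσ, Equiv.swap_apply_self] at h
        rw [← hσ] at h
        exact h
      calc ∏ l, q l ((e y) l) = ∏ l, (fun m => q' m (y m)) (σ l) := by
            refine Finset.prod_congr rfl fun l _ => ?_
            show q l (y (σ l)) = q' (σ l) (y (σ l))
            rw [h1 l]
        _ = ∏ l, q' l (y l) := Equiv.prod_comp σ fun l => q' l (y l)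
    rw [hprod]
    by_cases hz : ∃ l, q' l (y l) = 0
    · obtain ⟨l, hl⟩ := hz
      rw [Finset.prod_eq_zero (Finset.mem_univ l) hl, mul_zero, mul_zero]
    · push_neg at hz
      have hy : ∀ k, y k ∈ Y k := by
        intro k
        by_contra hk
        exact hz k ((hq'simp k).2.1 (y k) hk)
      have : u (e y) = u y := by
        have : e y = swapStrat y i j := comp_swap_eq y i j
        rw [this]
        exact (hpi i j hij).2 y hy
      rw [this]
  calc U u q = ∑ y : ι → A, u (e y) * ∏ l, q l ((e y) l) :=
        (Fintype.sum_equiv e _ _ fun y => rfl).symm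
    _ = ∑ y : ι → A, u y * ∏ l, q' l (y l) := Finset.sum_congr rfl fun y _ => key y
    _ = U u q' := rfl

lemma U_update_smul_sum (u : (ι → A) → ℝ) (p : ι → A → ℝ) (i : ι) (c : ℝ)
    (S : Finset ι) (b : ι → A → ℝ) :
    U u (Function.update p i (c • ∑ j ∈ S, b j)) =
      c * ∑ j ∈ S, U u (Function.update p i (b j)) := by
  simp only [U_update, Pi.smul_apply, Finset.sum_apply, smul_eq_mul,
    Finset.mul_sum, Finset.sum_mul]
  rw [Finset.sum_comm]
  exact Finset.sum_congr rfl fun j _ => Finset.sum_congr rfl fun y _ => by ring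

/-- Averaging a joint best response over each class yields a joint best response, when the
opponent profile is class-constant. -/
lemma centroid_mem_BR {Y : ι → Finset A} {u : (ι → A) → ℝ} {cls : ι → κ}
    (hpi : PermInvariant Y u cls) {p : ι → A → ℝ} (hpD : p ∈ Delta Y)
    (hcc : classConst cls p) {b : ι → A → ℝ} (hb : b ∈ BR Y u 0 p) :
    centroid cls b ∈ BR Y u 0 p := by
  intro i
  have hSne : (cluster cls i).Nonempty := ⟨i, mem_cluster_self cls i⟩
  have hcard : (0 : ℝ) < (cluster cls i).card := by
    exact_mod_cast cluster_card_pos cls i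
  have hbs : ∀ j ∈ cluster cls i, b j ∈ simplex (Y i) := fun j hj => by
    rw [← (hpi j i (mem_cluster_iff.1 hj)).1]; exact (hb j).1
  have hsimp : centroid cls b i ∈ simplex (Y i) := avg_mem_simplex hSne hbs
  refine ⟨hsimp, fun qi hqi => ?_⟩
  rw [sub_zero]
  have hcent : centroid cls b i =
      ((cluster cls i).card : ℝ)⁻¹ • ∑ j ∈ cluster cls i, b j := rfl
  rw [hcent, U_update_smul_sum]
  have hterm : ∀ j ∈ cluster cls i,
      U u (Function.update p i qi) ≤ U u (Function.update p i (b j)) := by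
    intro j hj
    have hji : cls j = cls i := mem_cluster_iff.1 hj
    have hYji : Y j = Y i := (hpi j i hji).1
    have h1 : U u (Function.update p j (b j)) = U u (Function.update p i (b j)) :=
      U_update_swap hpi hpD hcc hji (hb j).1
    have h2 : U u (Function.update p j qi) = U u (Function.update p i qi) :=
      U_update_swap hpi hpD hcc hji (by rw [hYji]; exact hqi)
    have h3 := (hb j).2 qi (by rw [hYji]; exact hqi)
    rw [sub_zero] at h3
    rw [← h1, ← h2]
    exact h3
  calc U u (Function.update p i qi)
      = ((cluster cls i).card : ℝ)⁻¹ *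
        ((cluster cls i).card * U u (Function.update p i qi)) := by
        field_simp
    _ ≤ ((cluster cls i).card : ℝ)⁻¹ *
        ∑ j ∈ cluster cls i, U u (Function.update p i (b j)) := by
        refine mul_le_mul_of_nonneg_left ?_ (inv_nonneg.2 hcard.le)
        calc ((cluster cls i).card : ℝ) * U u (Function.update p i qi)
            = ∑ _j ∈ cluster cls i, U u (Function.update p i qi) := by
              rw [Finset.sum_const, nsmul_eq_mul]
          _ ≤ _ := Finset.sum_le_sum hterm

/-- If `q^c` solves the joint CT-ECFP inclusion `q̇ ∈ BR(q̄) − q`, then its centroid process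
solves the centroid inclusion `ẏ ∈ BR(y) − y`. -/
theorem centroid_of_solution_isSolution
    (Y : ι → Finset A) (hY : ∀ i, (Y i).Nonempty) (u : (ι → A) → ℝ)
    (cls : ι → κ) (hpi : PermInvariant Y u cls)
    (x : ℝ → ι → A → ℝ) (hx : IsSolution Y (Fjoint Y u cls) x) :
    IsSolution Y (Fcent Y u) (fun t => centroid cls (x t)) := by
  obtain ⟨hxΔ, g, hgloc, hgmem, hgint⟩ := hx
  set L : (ι → A → ℝ) →L[ℝ] (ι → A → ℝ) := centroidCLM cls with hL
  refine ⟨fun t ht => centroid_mem_Delta hpi (hxΔ t ht), fun t => L (g t), ?_, ?_, ?_⟩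
  · -- local integrability
    intro t ht
    obtain ⟨s, hs, hint⟩ := hgloc t ht
    exact ⟨s, hs, L.integrable_comp hint⟩
  · -- a.e. membership in Fcent
    have hae : ∀ᵐ t ∂(volume.restrict (Set.Ici (0 : ℝ))), t ∈ Set.Ici (0 : ℝ) :=
      ae_restrict_mem measurableSet_Ici
    filter_upwards [hgmem, hae] with t hmem ht
    obtain ⟨b, hbBR, hbeq⟩ := hmem
    have hxΔt : x t ∈ Delta Y := hxΔ t ht
    have hcent_Δ : centroid cls (x t) ∈ Delta Y := centroid_mem_Delta hpi hxΔt
    refine ⟨centroid cls b,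
      centroid_mem_BR hpi hcent_Δ (centroid_classConst cls (x t)) hbBR, ?_⟩
    have : L (g t) = L b - L (x t) := by rw [← hbeq, map_sub]
    simpa [hL] using this.symm
  · -- integral identity
    intro t ht
    have hIcc : Set.Icc (0 : ℝ) t ⊆ Set.Ici (0 : ℝ) := Set.Icc_subset_Ici_self
    have hint : IntegrableOn g (Set.Ioc (0 : ℝ) t) :=
      (hgloc.integrableOn_compact_subset hIcc isCompact_Icc).mono_set
        Set.Ioc_subset_Icc_self
    have hmap := L.integral_comp_comm hint
    have hx0 := hgint t ht
    have : centroid cls (x t) = L (x 0) + L (∫ s in Set.Ioc (0 : ℝ) t, g s) := by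
      rw [← map_add]
      simp only [hL, centroidCLM_apply]
      rw [← hx0]
    show centroid cls (x t) = centroid cls (x 0) + ∫ s in Set.Ioc (0 : ℝ) t, L (g s)
    rw [this, ← hmap]
    rfl

end ECFP
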